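/- Let H ⊆ {1,…,n} with |H| = n−f be the non-faulty agents and m := n−r. Suppose each ∇Q_i for i ∈ H is μ-Lipschitz (Assumption 1), for every S ⊆ H with |S| ≥ n−f the average Q_S is γ-strongly convex (Assumption 3), the non-faulty cost functions satisfy (f,r;ε)-redundancy, and α := ((n−f)γ − 2(f+r)μ)/((n−r)γ) > 0. Fix x ∈ ℝ^d, a set S ⊆ {1,…,n} with |S| = m, vectors g_j for j ∈ S with g_j = ∇Q_j(x) for every j ∈ S ∩ H (the g_j for j ∈ S∖H are arbitrary), and a CGE(m,f) selection T from {g_j}_{j∈S}. Then ⟨x − x_H, Σ_{j∈T} g_j⟩ ≥ α·m·γ·‖x − x_H‖·(‖x − x_H‖ − 4μ(f+r)ε/(αγ)), where x_H is the unique minimizer of Σ_{j∈H} Q_j. -/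

import Mathlib

open Finset
open scoped RealInnerProductSpace

lemma grad_sum_min_eq_zero {d : ℕ} {ι : Type*} [DecidableEq ι] (A : Finset ι)
    (Q : ι → EuclideanSpace ℝ (Fin d) → ℝ) (y : EuclideanSpace ℝ (Fin d))
    (hdiff : ∀ i ∈ A, DifferentiableAt ℝ (Q i) y)
    (hmin : ∀ z, ∑ i ∈ A, Q i y ≤ ∑ i ∈ A, Q i z) :
    ∑ i ∈ A, gradient (Q i) y = 0 := by
  have hloc : IsLocalMin (fun z => ∑ i ∈ A, Q i z) y :=
    IsMinOn.isLocalMin (fun z _ => hmin z) (Filter.univ_mem)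
  have hfd : fderiv ℝ (fun z => ∑ i ∈ A, Q i z) y = 0 := hloc.fderiv_eq_zero
  have hsum : fderiv ℝ (fun z => ∑ i ∈ A, Q i z) y = ∑ i ∈ A, fderiv ℝ (Q i) y :=
    fderiv_fun_sum hdiff
  have : ∑ i ∈ A, fderiv ℝ (Q i) y = 0 := by rw [← hsum, hfd]
  calc ∑ i ∈ A, gradient (Q i) y
      = (InnerProductSpace.toDual ℝ _).symm (∑ i ∈ A, fderiv ℝ (Q i) y) := by
        simp [gradient, map_sum]
    _ = 0 := by rw [this]; simp

lemma key_nat (f r a c : ℕ) (h1 : 1 ≤ c) (h2 : a = 0 ∨ c = a + 2 * f) :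
    (2 * f + r) * (2 * a + 1) ≤ 4 * (f + r) * c := by
  rcases h2 with h2 | h2
  · subst h2
    nlinarith [h1]
  · subst h2
    rcases Nat.eq_zero_or_pos f with hf0 | hf1
    · subst hf0
      have ha1 : 1 ≤ a := by omega
      nlinarith [ha1]
    · have hh1 : f ≤ f * f := Nat.le_mul_of_pos_left f hf1
      have hh2 : r ≤ f * r := Nat.le_mul_of_pos_left r hf1
      nlinarith [hh1, hh2]

set_option maxHeartbeats 2000000 in
/-- lower bound on ⟨x − x_H, Σ_{j∈T} g_j⟩ for a CGE(m,f) selection T,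
under Assumptions 1 and 3 and (f,r;ε)-redundancy (m := n−r). -/
theorem stmt8 {d n f r : ℕ} (hd : 1 ≤ d)
    (H : Finset (Fin n)) (hHcard : H.card + f = n)
    (Q : Fin n → EuclideanSpace ℝ (Fin d) → ℝ) (μ γ ε : ℝ) (hγ : 0 < γ)
    (hdiff : ∀ i ∈ H, ∀ x, DifferentiableAt ℝ (Q i) x)
    -- Assumption 1: each ∇Q_i (i ∈ H) is μ-Lipschitz
    (hlip : ∀ i ∈ H, ∀ x y : EuclideanSpace ℝ (Fin d),
      ‖gradient (Q i) x - gradient (Q i) y‖ ≤ μ * ‖x - y‖)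
    -- Assumption 3: averages over subsets of H of ≥ n−f agents are γ-strongly convex
    (hsc : ∀ S : Finset (Fin n), S ⊆ H → n ≤ S.card + f →
      ∀ x y : EuclideanSpace ℝ (Fin d),
        γ * ‖x - y‖ ^ 2 ≤
          ⟪(S.card : ℝ)⁻¹ •
              (∑ j ∈ S, gradient (Q j) x - ∑ j ∈ S, gradient (Q j) y), x - y⟫)
    -- (f,r;ε)-redundancy of the non-faulty cost functions
    (hred : ∀ S Shat : Finset (Fin n), Shat ⊆ S → S ⊆ H →
      S.card + f = n → n ≤ Shat.card + r + 2 * f →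
      ({y : EuclideanSpace ℝ (Fin d) |
          ∀ z, ∑ i ∈ S, Q i y ≤ ∑ i ∈ S, Q i z}.Nonempty ∧
        {y : EuclideanSpace ℝ (Fin d) |
          ∀ z, ∑ i ∈ Shat, Q i y ≤ ∑ i ∈ Shat, Q i z}.Nonempty ∧
        Metric.hausdorffDist
          {y : EuclideanSpace ℝ (Fin d) | ∀ z, ∑ i ∈ S, Q i y ≤ ∑ i ∈ S, Q i z}
          {y : EuclideanSpace ℝ (Fin d) |
            ∀ z, ∑ i ∈ Shat, Q i y ≤ ∑ i ∈ Shat, Q i z} ≤ ε))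
    -- x_H is the (unique) minimizer of the aggregate non-faulty cost
    (xH : EuclideanSpace ℝ (Fin d))
    (hxH : ∀ z, ∑ j ∈ H, Q j xH ≤ ∑ j ∈ H, Q j z)
    (α : ℝ)
    (hα : α = (((n : ℝ) - f) * γ - 2 * ((f : ℝ) + r) * μ) / (((n : ℝ) - r) * γ))
    (hαpos : 0 < α)
    -- a point x, reported vectors g_j (correct on S ∩ H), and a CGE(m,f) selection T
    (x : EuclideanSpace ℝ (Fin d))
    (S : Finset (Fin n)) (hScard : S.card + r = n)
    (g : Fin n → EuclideanSpace ℝ (Fin d))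
    (hg : ∀ j ∈ S ∩ H, g j = gradient (Q j) x)
    (T : Finset (Fin n)) (hTS : T ⊆ S) (hTcard : T.card + f + r = n)
    (hord : ∀ j ∈ T, ∀ k ∈ S \ T, ‖g j‖ ≤ ‖g k‖) :
    α * ((n : ℝ) - r) * γ * ‖x - xH‖ *
        (‖x - xH‖ - 4 * μ * ((f : ℝ) + r) * ε / (α * γ)) ≤
      ⟪x - xH, ∑ j ∈ T, g j⟫ := by
  -- basic points to test with
  have hp : ‖(EuclideanSpace.single (⟨0, hd⟩ : Fin d) (1:ℝ))‖ = 1 := by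
    simp [EuclideanSpace.norm_single]
  -- H is nonempty
  have hHne : H.Nonempty := by
    rw [Finset.nonempty_iff_ne_empty]
    intro hH0
    have h := hsc ∅ (by simp [hH0]) (by simp [hH0] at hHcard; omega)
      (EuclideanSpace.single (⟨0, hd⟩ : Fin d) (1:ℝ)) 0
    simp [hp] at h
    nlinarith
  -- μ ≥ 0
  have hμnn : 0 ≤ μ := by
    obtain ⟨i, hi⟩ := hHne
    have h := hlip i hi (EuclideanSpace.single (⟨0, hd⟩ : Fin d) (1:ℝ)) 0
    simp [hp] at h
    exact le_trans (norm_nonneg _) h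
  -- ε ≥ 0
  have hεnn : 0 ≤ ε := by
    obtain ⟨-, -, h3⟩ := hred H H (Finset.Subset.refl H) (Finset.Subset.refl H)
      hHcard (by omega)
    exact le_trans Metric.hausdorffDist_nonneg h3
  -- real casts
  have hnf : ((n : ℝ) - f) = H.card := by
    have : (H.card : ℝ) + f = n := by exact_mod_cast congrArg (Nat.cast : ℕ → ℝ) hHcard
    linarith
  have hnr : ((n : ℝ) - r) = S.card := by
    have : (S.card : ℝ) + r = n := by exact_mod_cast congrArg (Nat.cast : ℕ → ℝ) hScard
    linarith
  have hSpos : 0 < (S.card : ℝ) := by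
    by_contra hS0
    push_neg at hS0
    have : (S.card : ℝ) = 0 := le_antisymm hS0 (by positivity)
    rw [hα, hnr, this] at hαpos
    simp at hαpos
  have hnrγ : ((n : ℝ) - r) * γ ≠ 0 := by rw [hnr]; positivity
  have hαP : α * (((n : ℝ) - r) * γ) =
      ((n : ℝ) - f) * γ - 2 * ((f : ℝ) + r) * μ := by
    rw [hα, div_mul_cancel₀ _ hnrγ]
  have hP : 0 < ((n : ℝ) - f) * γ - 2 * ((f : ℝ) + r) * μ := by
    rw [← hαP]
    have : 0 < ((n : ℝ) - r) * γ := by rw [hnr]; positivity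
    positivity
  -- gradient of aggregate at xH vanishes
  have hgradH : ∑ j ∈ H, gradient (Q j) xH = 0 :=
    grad_sum_min_eq_zero H Q xH (fun i hi => hdiff i hi xH) hxH
  -- strong monotonicity of partial sums of gradients
  have hmono : ∀ A : Finset (Fin n), A ⊆ H → ∀ y z : EuclideanSpace ℝ (Fin d),
      (H.card : ℝ) * γ * ‖y - z‖ ^ 2 - ((H \ A).card : ℝ) * (μ * ‖y - z‖ ^ 2) ≤
        ⟪∑ i ∈ A, gradient (Q i) y - ∑ i ∈ A, gradient (Q i) z, y - z⟫ := by
    intro A hA y z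
    have hc : 0 < (H.card : ℝ) := by
      exact_mod_cast Finset.card_pos.mpr hHne
    have key1 : (H.card : ℝ) * γ * ‖y - z‖ ^ 2 ≤
        ⟪∑ i ∈ H, gradient (Q i) y - ∑ i ∈ H, gradient (Q i) z, y - z⟫ := by
      have h := hsc H (Finset.Subset.refl H) (by omega) y z
      rw [real_inner_smul_left] at h
      have h2 := mul_le_mul_of_nonneg_left h (le_of_lt hc)
      calc (H.card : ℝ) * γ * ‖y - z‖ ^ 2 = (H.card : ℝ) * (γ * ‖y - z‖ ^ 2) := by ring
        _ ≤ (H.card : ℝ) * ((H.card : ℝ)⁻¹ *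
            ⟪∑ i ∈ H, gradient (Q i) y - ∑ i ∈ H, gradient (Q i) z, y - z⟫) := h2
        _ = ⟪∑ i ∈ H, gradient (Q i) y - ∑ i ∈ H, gradient (Q i) z, y - z⟫ := by
            field_simp
    have key2 : ⟪∑ i ∈ H \ A, gradient (Q i) y - ∑ i ∈ H \ A, gradient (Q i) z, y - z⟫ ≤
        ((H \ A).card : ℝ) * (μ * ‖y - z‖ ^ 2) := by
      have hsub : ‖∑ i ∈ H \ A, gradient (Q i) y - ∑ i ∈ H \ A, gradient (Q i) z‖ ≤
          ((H \ A).card : ℝ) * (μ * ‖y - z‖) := by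
        rw [← Finset.sum_sub_distrib]
        refine le_trans (norm_sum_le _ _) ?_
        rw [← nsmul_eq_mul]
        exact Finset.sum_le_card_nsmul _ _ _
          (fun i hi => hlip i (Finset.mem_sdiff.mp hi).1 y z)
      calc ⟪∑ i ∈ H \ A, gradient (Q i) y - ∑ i ∈ H \ A, gradient (Q i) z, y - z⟫ ≤
          ‖∑ i ∈ H \ A, gradient (Q i) y - ∑ i ∈ H \ A, gradient (Q i) z‖ * ‖y - z‖ :=
            real_inner_le_norm _ _
        _ ≤ ((H \ A).card : ℝ) * (μ * ‖y - z‖) * ‖y - z‖ :=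
            mul_le_mul_of_nonneg_right hsub (norm_nonneg _)
        _ = ((H \ A).card : ℝ) * (μ * ‖y - z‖ ^ 2) := by ring
    have e : ∑ i ∈ A, gradient (Q i) y - ∑ i ∈ A, gradient (Q i) z =
        (∑ i ∈ H, gradient (Q i) y - ∑ i ∈ H, gradient (Q i) z) -
          (∑ i ∈ H \ A, gradient (Q i) y - ∑ i ∈ H \ A, gradient (Q i) z) := by
      rw [← Finset.sum_sdiff hA (f := fun i => gradient (Q i) y),
        ← Finset.sum_sdiff hA (f := fun i => gradient (Q i) z)]
      abel
    rw [e, inner_sub_left]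
    linarith [key1, key2]
  -- nearby minimizers of admissible subsets
  have hnear : ∀ A : Finset (Fin n), A ⊆ H → n ≤ A.card + r + 2 * f →
      ∃ xh : EuclideanSpace ℝ (Fin d),
        (∑ i ∈ A, gradient (Q i) xh = 0) ∧ dist xH xh ≤ ε := by
    intro A hAH hAcard
    obtain ⟨h1, h2, h3⟩ := hred H A hAH (Finset.Subset.refl H) hHcard hAcard
    obtain ⟨xh, hxh⟩ := h2
    have hxh' : ∀ z, ∑ i ∈ A, Q i xh ≤ ∑ i ∈ A, Q i z := hxh
    have hgradA : ∑ i ∈ A, gradient (Q i) xh = 0 :=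
      grad_sum_min_eq_zero A Q xh (fun i hi => hdiff i (hAH hi) xh) hxh'
    have hDcard : ((H \ A).card : ℝ) * μ < (H.card : ℝ) * γ := by
      have hle : (H \ A).card ≤ f + r := by
        rw [Finset.card_sdiff_of_subset hAH]; omega
      have hle' : ((H \ A).card : ℝ) ≤ (f : ℝ) + r := by exact_mod_cast hle
      have h1 : ((H \ A).card : ℝ) * μ ≤ ((f : ℝ) + r) * μ :=
        mul_le_mul_of_nonneg_right hle' hμnn
      have h2 : ((f : ℝ) + r) * μ ≤ 2 * ((f : ℝ) + r) * μ := by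
        have : (0:ℝ) ≤ ((f : ℝ) + r) * μ := by positivity
        nlinarith
      have h3 : 2 * ((f : ℝ) + r) * μ < (H.card : ℝ) * γ := by
        rw [← hnf]; linarith [hP]
      linarith
    have hset1 : {y : EuclideanSpace ℝ (Fin d) |
        ∀ z, ∑ i ∈ H, Q i y ≤ ∑ i ∈ H, Q i z} = {xH} := by
      apply Set.eq_singleton_iff_unique_mem.mpr
      refine ⟨hxH, fun y hy => ?_⟩
      have hy0 : ∑ i ∈ H, gradient (Q i) y = 0 :=
        grad_sum_min_eq_zero H Q y (fun i hi => hdiff i hi y) hy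
      have h := hsc H (Finset.Subset.refl H) (by omega) y xH
      rw [hy0, hgradH, sub_zero, smul_zero, inner_zero_left] at h
      have hsq : ‖y - xH‖ ^ 2 ≤ 0 := by
        by_contra hc
        push_neg at hc
        exact absurd h (not_le.mpr (mul_pos hγ hc))
      have hn0 : ‖y - xH‖ = 0 :=
        (pow_eq_zero_iff two_ne_zero).mp (le_antisymm hsq (sq_nonneg _))
      exact sub_eq_zero.mp (norm_eq_zero.mp hn0)
    have hset2 : {y : EuclideanSpace ℝ (Fin d) |
        ∀ z, ∑ i ∈ A, Q i y ≤ ∑ i ∈ A, Q i z} = {xh} := by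
      apply Set.eq_singleton_iff_unique_mem.mpr
      refine ⟨hxh', fun y hy => ?_⟩
      have hy0 : ∑ i ∈ A, gradient (Q i) y = 0 :=
        grad_sum_min_eq_zero A Q y (fun i hi => hdiff i (hAH hi) y) hy
      have h := hmono A hAH y xh
      rw [hy0, hgradA, sub_zero, inner_zero_left] at h
      have h' : ((H.card : ℝ) * γ - ((H \ A).card : ℝ) * μ) * ‖y - xh‖ ^ 2 ≤ 0 := by
        calc ((H.card : ℝ) * γ - ((H \ A).card : ℝ) * μ) * ‖y - xh‖ ^ 2
            = (H.card : ℝ) * γ * ‖y - xh‖ ^ 2 -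
              ((H \ A).card : ℝ) * (μ * ‖y - xh‖ ^ 2) := by ring
          _ ≤ 0 := h
      have hsq : ‖y - xh‖ ^ 2 ≤ 0 := by
        by_contra hc
        push_neg at hc
        exact absurd h' (not_le.mpr (mul_pos (sub_pos.mpr hDcard) hc))
      have hn0 : ‖y - xh‖ = 0 :=
        (pow_eq_zero_iff two_ne_zero).mp (le_antisymm hsq (sq_nonneg _))
      exact sub_eq_zero.mp (norm_eq_zero.mp hn0)
    have hED : EMetric.hausdorffEdist
        {y : EuclideanSpace ℝ (Fin d) | ∀ z, ∑ i ∈ H, Q i y ≤ ∑ i ∈ H, Q i z}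
        {y : EuclideanSpace ℝ (Fin d) | ∀ z, ∑ i ∈ A, Q i y ≤ ∑ i ∈ A, Q i z} ≠ ⊤ := by
      rw [hset1, hset2]
      have hle : EMetric.hausdorffEdist ({xH} : Set (EuclideanSpace ℝ (Fin d))) {xh} ≤
          edist xH xh := by
        apply EMetric.hausdorffEdist_le_of_mem_edist
        · intro z hz
          rw [Set.mem_singleton_iff] at hz
          exact ⟨xh, Set.mem_singleton _, by rw [hz]⟩
        · intro z hz
          rw [Set.mem_singleton_iff] at hz
          exact ⟨xH, Set.mem_singleton _, by rw [hz, edist_comm]⟩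
      exact ne_top_of_le_ne_top (edist_ne_top xH xh) hle
    have hdist : dist xH xh ≤ ε := by
      have h := Metric.infDist_le_hausdorffDist_of_mem
        (show xH ∈ {y : EuclideanSpace ℝ (Fin d) |
          ∀ z, ∑ i ∈ H, Q i y ≤ ∑ i ∈ H, Q i z} from hxH) hED
      rw [hset2, Metric.infDist_singleton] at h
      rw [hset2] at h3
      exact le_trans h h3
    exact ⟨xh, hgradA, hdist⟩
  -- bound on individual honest gradients at xH
  set a : ℕ := n - (r + 2 * f) with ha
  have hB : 1 ≤ f + r → ∀ k ∈ H, ‖gradient (Q k) xH‖ ≤ (2 * (a : ℝ) + 1) * (μ * ε) := by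
    intro hfr k hk
    have hbound : ∀ B : Finset (Fin n), B ⊆ H → ∀ xb : EuclideanSpace ℝ (Fin d),
        (∑ i ∈ B, gradient (Q i) xb = 0) → dist xH xb ≤ ε →
        ‖∑ i ∈ B, gradient (Q i) xH‖ ≤ (B.card : ℝ) * (μ * ε) := by
      intro B hBH xb hzero hdist
      have : ‖∑ i ∈ B, gradient (Q i) xH‖ =
          ‖∑ i ∈ B, (gradient (Q i) xH - gradient (Q i) xb)‖ := by
        rw [Finset.sum_sub_distrib, hzero, sub_zero]
      rw [this]
      refine le_trans (norm_sum_le _ _) ?_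
      rw [← nsmul_eq_mul]
      refine Finset.sum_le_card_nsmul _ _ _ (fun i hi => ?_)
      refine le_trans (hlip i (hBH hi) xH xb) ?_
      have : ‖xH - xb‖ = dist xH xb := by rw [dist_eq_norm]
      rw [this]
      exact mul_le_mul_of_nonneg_left hdist hμnn
    have hcardHk : a ≤ (H.erase k).card := by
      rw [Finset.card_erase_of_mem hk]
      have hk1 : 1 ≤ H.card := Finset.card_pos.mpr ⟨k, hk⟩
      omega
    obtain ⟨A, hAsub, hAcard⟩ := Finset.exists_subset_card_eq hcardHk
    have hkA : k ∉ A := fun hka => Finset.notMem_erase k H (hAsub hka)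
    have hAH : A ⊆ H := hAsub.trans (Finset.erase_subset k H)
    -- the set insert k A
    obtain ⟨x1, hx1, hd1⟩ := hnear (insert k A)
      (Finset.insert_subset hk hAH)
      (by rw [Finset.card_insert_of_notMem hkA, hAcard]; omega)
    have h1 : ‖∑ i ∈ insert k A, gradient (Q i) xH‖ ≤ ((a : ℝ) + 1) * (μ * ε) := by
      have := hbound (insert k A) (Finset.insert_subset hk hAH) x1 hx1 hd1
      rwa [Finset.card_insert_of_notMem hkA, hAcard, Nat.cast_add, Nat.cast_one] at this
    have h2 : ‖∑ i ∈ A, gradient (Q i) xH‖ ≤ (a : ℝ) * (μ * ε) := by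
      rcases Nat.eq_zero_or_pos a with ha0 | hapos
      · have : A = ∅ := Finset.card_eq_zero.mp (by rw [hAcard, ha0])
        rw [this]
        simp [ha0]
      · obtain ⟨x2, hx2, hd2⟩ := hnear A hAH (by rw [hAcard]; omega)
        have := hbound A hAH x2 hx2 hd2
        rwa [hAcard] at this
    have hdecomp : gradient (Q k) xH =
        (∑ i ∈ insert k A, gradient (Q i) xH) - ∑ i ∈ A, gradient (Q i) xH := by
      rw [Finset.sum_insert hkA]
      abel
    rw [hdecomp]
    refine le_trans (norm_sub_le _ _) ?_
    calc ‖∑ i ∈ insert k A, gradient (Q i) xH‖ + ‖∑ i ∈ A, gradient (Q i) xH‖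
        ≤ ((a : ℝ) + 1) * (μ * ε) + (a : ℝ) * (μ * ε) := add_le_add h1 h2
      _ = (2 * (a : ℝ) + 1) * (μ * ε) := by ring
  -- bound on honest gradients at x
  have hC : 1 ≤ f + r → ∀ k ∈ H, ‖gradient (Q k) x‖ ≤
      μ * ‖x - xH‖ + (2 * (a : ℝ) + 1) * (μ * ε) := by
    intro hfr k hk
    calc ‖gradient (Q k) x‖
        ≤ ‖gradient (Q k) x - gradient (Q k) xH‖ + ‖gradient (Q k) xH‖ :=
          by
          have h := norm_le_insert' (gradient (Q k) x) (gradient (Q k) xH)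
          simp at h ⊢
          linarith [h]
      _ ≤ μ * ‖x - xH‖ + (2 * (a : ℝ) + 1) * (μ * ε) :=
          add_le_add (hlip k hk x xH) (hB hfr k hk)
  -- cardinality facts
  have hS1 : 1 ≤ S.card := Nat.cast_pos.mp hSpos
  have hcompl : Hᶜ.card = f := by
    rw [Finset.card_compl]
    simp only [Fintype.card_fin]
    omega
  have hTHf : (T \ H).card ≤ f := by
    rw [← hcompl]
    exact Finset.card_le_card (fun j hj => Finset.mem_compl.mpr (Finset.mem_sdiff.mp hj).2)
  have hHTsum : (H \ T).card + (T \ H).card ≤ 2 * f + r := by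
    have e1 : (H \ T).card + (H ∩ T).card = H.card := Finset.card_sdiff_add_card_inter H T
    have e2 : (T \ H).card + (T ∩ H).card = T.card := Finset.card_sdiff_add_card_inter T H
    have e3 : (H ∩ T).card = (T ∩ H).card := by rw [Finset.inter_comm]
    omega
  have hSTH : (T \ H).Nonempty → ((S \ T) ∩ H).Nonempty := by
    intro hne
    have h1 : 1 ≤ (T \ H).card := Finset.card_pos.mpr hne
    have hSTcard : (S \ T).card = f := by
      rw [Finset.card_sdiff_of_subset hTS]; omega
    have hdisj : Disjoint (T \ H) ((S \ T) \ H) :=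
      Finset.disjoint_of_subset_left Finset.sdiff_subset
        (Finset.disjoint_of_subset_right Finset.sdiff_subset Finset.disjoint_sdiff)
    have hsub : (T \ H) ∪ ((S \ T) \ H) ⊆ Hᶜ := by
      intro j hj
      rcases Finset.mem_union.mp hj with hj | hj
      · exact Finset.mem_compl.mpr (Finset.mem_sdiff.mp hj).2
      · exact Finset.mem_compl.mpr (Finset.mem_sdiff.mp hj).2
    have hcard : (T \ H).card + ((S \ T) \ H).card ≤ f := by
      rw [← Finset.card_union_of_disjoint hdisj, ← hcompl]
      exact Finset.card_le_card hsub
    have e4 : ((S \ T) \ H).card + ((S \ T) ∩ H).card = (S \ T).card :=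
      Finset.card_sdiff_add_card_inter (S \ T) H
    exact Finset.card_pos.mp (by omega)
  -- the key natural-number inequality
  have hkey : (2 * f + r) * (2 * a + 1) ≤ 4 * (f + r) * S.card :=
    key_nat f r a S.card hS1 (by omega)
  -- decompose the selected sum
  set C : ℝ := μ * ‖x - xH‖ + (2 * (a : ℝ) + 1) * (μ * ε) with hCdef
  have hCnn : 0 ≤ C := by
    rw [hCdef]
    have h1 : 0 ≤ μ * ‖x - xH‖ := mul_nonneg hμnn (norm_nonneg _)
    have h2 : 0 ≤ (2 * (a : ℝ) + 1) * (μ * ε) := by positivity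
    linarith
  have eH : ∑ j ∈ H \ T, gradient (Q j) x + ∑ j ∈ H ∩ T, gradient (Q j) x
      = ∑ j ∈ H, gradient (Q j) x := by
    rw [← Finset.sdiff_inter_self_left H T]
    exact Finset.sum_sdiff Finset.inter_subset_left
  have eT : ∑ j ∈ T \ H, g j + ∑ j ∈ T ∩ H, g j = ∑ j ∈ T, g j := by
    rw [← Finset.sdiff_inter_self_left T H]
    exact Finset.sum_sdiff Finset.inter_subset_left
  have eg : ∑ j ∈ T ∩ H, g j = ∑ j ∈ H ∩ T, gradient (Q j) x := by
    rw [Finset.inter_comm]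
    refine Finset.sum_congr rfl (fun j hj => ?_)
    have hj' := Finset.mem_inter.mp hj
    exact hg j (Finset.mem_inter.mpr ⟨hTS hj'.2, hj'.1⟩)
  have hdec : ∑ j ∈ T, g j = (∑ j ∈ H, gradient (Q j) x)
      - (∑ j ∈ H \ T, gradient (Q j) x) + ∑ j ∈ T \ H, g j := by
    rw [← eH, ← eT, eg]
    abel
  have hinner : ⟪x - xH, ∑ j ∈ T, g j⟫ =
      ⟪x - xH, ∑ j ∈ H, gradient (Q j) x⟫
        - ⟪x - xH, ∑ j ∈ H \ T, gradient (Q j) x⟫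
        + ⟪x - xH, ∑ j ∈ T \ H, g j⟫ := by
    rw [hdec, inner_add_right, inner_sub_right]
  have N1 : (H.card : ℝ) * γ * ‖x - xH‖ ^ 2 ≤
      ⟪x - xH, ∑ j ∈ H, gradient (Q j) x⟫ := by
    have h := hmono H (Finset.Subset.refl H) x xH
    rw [hgradH, sub_zero, Finset.sdiff_self, real_inner_comm] at h
    have h2 : (((∅ : Finset (Fin n)).card : ℝ)) * (μ * ‖x - xH‖ ^ 2) = 0 := by
      norm_num
    linarith [h, h2]
  have normbound : ∀ (W : Finset (Fin n)) (v : Fin n → EuclideanSpace ℝ (Fin d)),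
      (∀ j ∈ W, ‖v j‖ ≤ C) → ‖∑ j ∈ W, v j‖ ≤ (W.card : ℝ) * C := by
    intro W v hv
    refine le_trans (norm_sum_le _ _) ?_
    rw [← nsmul_eq_mul]
    exact Finset.sum_le_card_nsmul _ _ _ hv
  have hHTb : ‖∑ j ∈ H \ T, gradient (Q j) x‖ ≤ ((H \ T).card : ℝ) * C := by
    refine normbound _ _ (fun j hj => ?_)
    have hfr : 1 ≤ f + r := by
      have h1 : 1 ≤ (H \ T).card := Finset.card_pos.mpr ⟨j, hj⟩
      omega
    exact hC hfr j (Finset.mem_sdiff.mp hj).1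
  have hTHb : ‖∑ j ∈ T \ H, g j‖ ≤ ((T \ H).card : ℝ) * C := by
    refine normbound _ _ (fun j hj => ?_)
    have hne : (T \ H).Nonempty := ⟨j, hj⟩
    obtain ⟨k0, hk0⟩ := hSTH hne
    have hk0ST : k0 ∈ S \ T := (Finset.mem_inter.mp hk0).1
    have hk0H : k0 ∈ H := (Finset.mem_inter.mp hk0).2
    have hfr : 1 ≤ f + r := by
      have h1 : 1 ≤ (T \ H).card := Finset.card_pos.mpr hne
      omega
    calc ‖g j‖ ≤ ‖g k0‖ := hord j (Finset.mem_sdiff.mp hj).1 k0 hk0ST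
      _ = ‖gradient (Q k0) x‖ := by
          rw [hg k0 (Finset.mem_inter.mpr ⟨(Finset.mem_sdiff.mp hk0ST).1, hk0H⟩)]
      _ ≤ C := hC hfr k0 hk0H
  have b2 : |⟪x - xH, ∑ j ∈ H \ T, gradient (Q j) x⟫| ≤
      ‖x - xH‖ * (((H \ T).card : ℝ) * C) :=
    le_trans (abs_real_inner_le_norm _ _) (mul_le_mul_of_nonneg_left hHTb (norm_nonneg _))
  have b3 : |⟪x - xH, ∑ j ∈ T \ H, g j⟫| ≤
      ‖x - xH‖ * (((T \ H).card : ℝ) * C) :=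
    le_trans (abs_real_inner_le_norm _ _) (mul_le_mul_of_nonneg_left hTHb (norm_nonneg _))
  have hlow : (H.card : ℝ) * γ * ‖x - xH‖ ^ 2
      - ‖x - xH‖ * (((H \ T).card : ℝ) * C) - ‖x - xH‖ * (((T \ H).card : ℝ) * C)
      ≤ ⟪x - xH, ∑ j ∈ T, g j⟫ := by
    rw [hinner]
    have b2' := abs_le.mp b2
    have b3' := abs_le.mp b3
    linarith [N1, b2'.1, b2'.2, b3'.1, b3'.2]
  -- final algebra
  have hαγ : α * γ ≠ 0 := ne_of_gt (mul_pos hαpos hγ)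
  have hcancel : 4 * μ * ((f : ℝ) + r) * ε / (α * γ) * (α * γ)
      = 4 * μ * ((f : ℝ) + r) * ε := div_mul_cancel₀ _ hαγ
  have hE : α * ((n : ℝ) - r) * γ * ‖x - xH‖ *
        (‖x - xH‖ - 4 * μ * ((f : ℝ) + r) * ε / (α * γ))
      = (((n : ℝ) - f) * γ - 2 * ((f : ℝ) + r) * μ) * ‖x - xH‖ ^ 2
        - ((n : ℝ) - r) * (4 * μ * ((f : ℝ) + r) * ε) * ‖x - xH‖ := by
    linear_combination (‖x - xH‖ ^ 2) * hαP - (((n : ℝ) - r) * ‖x - xH‖) * hcancel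
  rw [hE]
  refine le_trans ?_ hlow
  -- remaining: purely real arithmetic
  have hc12 : ((H \ T).card : ℝ) + ((T \ H).card : ℝ) ≤ 2 * (f : ℝ) + r := by
    exact_mod_cast hHTsum
  have s1 : (((H \ T).card : ℝ) + ((T \ H).card : ℝ)) * (C * ‖x - xH‖)
      ≤ (2 * (f : ℝ) + r) * (C * ‖x - xH‖) :=
    mul_le_mul_of_nonneg_right hc12 (mul_nonneg hCnn (norm_nonneg _))
  have s2 : (2 * (f : ℝ) + r) * (C * ‖x - xH‖)
      = (2 * (f : ℝ) + r) * μ * ‖x - xH‖ ^ 2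
        + ((2 * (f : ℝ) + r) * (2 * (a : ℝ) + 1)) * (μ * ε) * ‖x - xH‖ := by
    rw [hCdef]; ring
  have s3 : (2 * (f : ℝ) + r) * (2 * (a : ℝ) + 1)
      ≤ 4 * ((f : ℝ) + r) * (S.card : ℝ) := by
    exact_mod_cast hkey
  have s4 : ((2 * (f : ℝ) + r) * (2 * (a : ℝ) + 1)) * (μ * ε) * ‖x - xH‖
      ≤ (4 * ((f : ℝ) + r) * (S.card : ℝ)) * (μ * ε) * ‖x - xH‖ :=
    mul_le_mul_of_nonneg_right
      (mul_le_mul_of_nonneg_right s3 (mul_nonneg hμnn hεnn)) (norm_nonneg _)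
  have s5 : (2 * (f : ℝ) + r) * μ * ‖x - xH‖ ^ 2
      ≤ 2 * ((f : ℝ) + r) * μ * ‖x - xH‖ ^ 2 := by
    have h1 : (0 : ℝ) ≤ μ * ‖x - xH‖ ^ 2 := by positivity
    have h2 : (2 * (f : ℝ) + r) ≤ 2 * ((f : ℝ) + r) := by
      have : (0 : ℝ) ≤ r := by positivity
      linarith
    nlinarith [h1, h2]
  have hnf2 : (H.card : ℝ) * γ * ‖x - xH‖ ^ 2
      = ((n : ℝ) - f) * γ * ‖x - xH‖ ^ 2 := by rw [hnf]
  have hnr2 : ((n : ℝ) - r) * (4 * μ * ((f : ℝ) + r) * ε) * ‖x - xH‖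
      = (S.card : ℝ) * (4 * μ * ((f : ℝ) + r) * ε) * ‖x - xH‖ := by rw [hnr]
  nlinarith [s1, s2, s4, s5, hnf2, hnr2]
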